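/- Let K be a compact Hausdorff space, L ⊆ K a compact P-set, and μ a regular Borel (Radon) measure on K. Then there is an open neighbourhood U of L with μ(U \ L) = 0. -/

import Mathlib

open MeasureTheory
open scoped ENNReal

/-- A set `L` is a P-set if every Gδ-set containing `L` is a neighbourhood of `L`. -/
def IsPSet {Y : Type*} [TopologicalSpace Y] (L : Set Y) : Prop :=
  ∀ G : Set Y, IsGδ G → L ⊆ G → L ⊆ interior G

theorem pset_has_null_frontier_neighbourhood
    {K : Type*} [TopologicalSpace K] [CompactSpace K] [T2Space K]
    [MeasurableSpace K] [BorelSpace K]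
    {L : Set K} (hLc : IsCompact L) (hP : IsPSet L)
    (μ : Measure K) [IsFiniteMeasure μ] [μ.Regular] :
    ∃ U : Set K, IsOpen U ∧ L ⊆ U ∧ μ (U \ L) = 0 := by
  have hLm : MeasurableSet L := hLc.isClosed.measurableSet
  -- choose for each n an open set containing L with small excess measure
  have h : ∀ n : ℕ, ∃ V : Set K, L ⊆ V ∧ IsOpen V ∧ μ (V \ L) < (1 / (n + 1) : ℝ≥0∞) := by
    intro n
    obtain ⟨V, hLV, hVopen, _, hμ⟩ := hLm.exists_isOpen_diff_lt (μ := μ)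
      (measure_ne_top μ L) (by simp : (1 / (n + 1) : ℝ≥0∞) ≠ 0)
    exact ⟨V, hLV, hVopen, hμ⟩
  choose V hLV hVopen hμV using h
  set G : Set K := ⋂ n, V n with hG
  have hGδ : IsGδ G := .iInter_of_isOpen hVopen
  have hLG : L ⊆ G := Set.subset_iInter hLV
  refine ⟨interior G, isOpen_interior, hP G hGδ hLG, ?_⟩
  have hle : ∀ n : ℕ, μ (interior G \ L) ≤ (1 / (n + 1) : ℝ≥0∞) := by
    intro n
    refine le_of_lt (lt_of_le_of_lt (measure_mono ?_) (hμV n))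
    exact Set.diff_subset_diff_left (interior_subset.trans (Set.iInter_subset _ n))
  refine le_antisymm (ENNReal.le_of_forall_pos_le_add fun ε hε _ => ?_) zero_le
  obtain ⟨n, hn⟩ := ENNReal.exists_inv_nat_lt (by exact_mod_cast hε.ne' : (ε : ℝ≥0∞) ≠ 0)
  calc μ (interior G \ L) ≤ (1 / (n + 1) : ℝ≥0∞) := hle n
    _ ≤ (n : ℝ≥0∞)⁻¹ := by
        rw [one_div]
        exact ENNReal.inv_le_inv.mpr (by exact_mod_cast Nat.le_succ n)
    _ ≤ 0 + ε := by simpa using hn.le
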